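/- For every real λ > 0, ∫₀¹ 1/((1-t) + tλ) · dt/(π√(t(1-t))) = λ^{-1/2}. -/

import Mathlib

open MeasureTheory Real Filter Set Topology

theorem arcsine_resolvent (l : ℝ) (hl : 0 < l) :
    ∫ t in (0:ℝ)..1,
        (1 / ((1 - t) + t * l)) * (1 / (Real.pi * Real.sqrt (t * (1 - t)))) =
      l ^ (-(1/2) : ℝ) := by
  have hsl : 0 < Real.sqrt l := Real.sqrt_pos.2 hl
  have hpi : (0:ℝ) < Real.pi := Real.pi_pos
  set c : ℝ := 2 / (Real.pi * Real.sqrt l) with hc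
  set f' : ℝ → ℝ := fun t =>
      (1 / ((1 - t) + t * l)) * (1 / (Real.pi * Real.sqrt (t * (1 - t)))) with hf'
  set F : ℝ → ℝ := fun t =>
      if t < 1 then c * Real.arctan (Real.sqrt l * Real.sqrt t / Real.sqrt (1 - t))
      else 1 / Real.sqrt l with hF
  -- derivative on Ioo 0 1
  have hderiv : ∀ x ∈ Ioo (0:ℝ) 1, HasDerivAt F (f' x) x := by
    intro x hx
    obtain ⟨hx0, hx1⟩ := hx
    have h1x : 0 < 1 - x := by linarith
    have hsx : 0 < Real.sqrt x := Real.sqrt_pos.2 hx0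
    have hs1x : 0 < Real.sqrt (1 - x) := Real.sqrt_pos.2 h1x
    have hd1 : HasDerivAt (fun t : ℝ => Real.sqrt (1 - t))
        (1 / (2 * Real.sqrt (1 - x)) * (-1)) x := by
      exact (Real.hasDerivAt_sqrt h1x.ne').comp x
        (((hasDerivAt_id x).const_sub 1).congr_deriv (by ring)) |>.congr_deriv rfl
    have hd2 : HasDerivAt (fun t : ℝ => Real.sqrt l * Real.sqrt t / Real.sqrt (1 - t))
        (Real.sqrt l * ((1 / (2 * Real.sqrt x) * Real.sqrt (1 - x) -
            Real.sqrt x * (1 / (2 * Real.sqrt (1 - x)) * (-1))) / (Real.sqrt (1 - x)) ^ 2)) x := by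
      have := (((Real.hasDerivAt_sqrt hx0.ne').div hd1 hs1x.ne').const_mul (Real.sqrt l))
      simpa [mul_div_assoc] using this
    have hd3 := (hd2.arctan).const_mul c
    have hFeq : F =ᶠ[nhds x]
        (fun t => c * Real.arctan (Real.sqrt l * Real.sqrt t / Real.sqrt (1 - t))) := by
      filter_upwards [Iio_mem_nhds hx1] with t ht
      exact if_pos ht
    refine (hd3.congr_of_eventuallyEq hFeq).congr_deriv ?_
    have hax : Real.sqrt x ^ 2 = x := Real.sq_sqrt hx0.le
    have ha1x : Real.sqrt (1 - x) ^ 2 = 1 - x := Real.sq_sqrt h1x.le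
    have hal : Real.sqrt l ^ 2 = l := Real.sq_sqrt hl.le
    have hmul : Real.sqrt (x * (1 - x)) = Real.sqrt x * Real.sqrt (1 - x) :=
      Real.sqrt_mul hx0.le _
    have hden : (0:ℝ) < (1 - x) + x * l := by positivity
    have key : (1:ℝ) / (1 + (Real.sqrt l * Real.sqrt x / Real.sqrt (1 - x)) ^ 2)
        = (1 - x) / ((1 - x) + x * l) := by
      rw [div_pow, mul_pow, hax, hal, ha1x]
      rw [div_eq_div_iff (by positivity) hden.ne']
      field_simp [h1x.ne']
    have key2 : (1 / (2 * Real.sqrt x) * Real.sqrt (1 - x) -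
          Real.sqrt x * (1 / (2 * Real.sqrt (1 - x)) * -1)) / Real.sqrt (1 - x) ^ 2
        = 1 / (2 * Real.sqrt x * Real.sqrt (1 - x) * (1 - x)) := by
      rw [ha1x]
      rw [div_eq_div_iff (by positivity) (by positivity)]
      field_simp
      linear_combination hax + ha1x
    rw [key, key2, hc]
    simp only [hf']
    rw [hmul]
    field_simp
  -- nonnegativity
  have hpos : ∀ x ∈ Ioo (0:ℝ) 1, 0 ≤ f' x := by
    intro x hx
    have h1x : 0 < 1 - x := by linarith [hx.2]
    have hden : (0:ℝ) < (1 - x) + x * l := by nlinarith [hx.1]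
    have : 0 ≤ Real.sqrt (x * (1 - x)) := Real.sqrt_nonneg _
    positivity
  -- limit at 1⁻
  have htop : Tendsto (fun t : ℝ => Real.sqrt l * Real.sqrt t / Real.sqrt (1 - t))
      (nhdsWithin 1 (Iio 1)) atTop := by
    have hnum : Tendsto (fun t : ℝ => Real.sqrt l * Real.sqrt t)
        (nhdsWithin 1 (Iio 1)) (nhds (Real.sqrt l)) := by
      have : Continuous fun t : ℝ => Real.sqrt l * Real.sqrt t := by continuity
      simpa using (this.tendsto 1).mono_left nhdsWithin_le_nhds
    have hden : Tendsto (fun t : ℝ => (Real.sqrt (1 - t))⁻¹)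
        (nhdsWithin 1 (Iio 1)) atTop := by
      apply tendsto_inv_nhdsGT_zero.comp
      rw [tendsto_nhdsWithin_iff]
      constructor
      · have : Continuous fun t : ℝ => Real.sqrt (1 - t) := by continuity
        simpa using (this.tendsto 1).mono_left nhdsWithin_le_nhds
      · filter_upwards [self_mem_nhdsWithin] with t (ht : t < 1)
        exact Real.sqrt_pos.2 (by linarith)
    simpa [div_eq_mul_inv] using hnum.pos_mul_atTop hsl hden
  have hb : Tendsto F (nhdsWithin 1 (Iio 1)) (nhds (1 / Real.sqrt l)) := by
    have h1 : Tendsto (fun t : ℝ =>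
        c * Real.arctan (Real.sqrt l * Real.sqrt t / Real.sqrt (1 - t)))
        (nhdsWithin 1 (Iio 1)) (nhds (c * (Real.pi / 2))) := by
      exact (tendsto_nhds_of_tendsto_nhdsWithin (Real.tendsto_arctan_atTop.comp htop)).const_mul c
    have : c * (Real.pi / 2) = 1 / Real.sqrt l := by
      rw [hc]
      field_simp
    rw [← this]
    refine h1.congr' ?_
    filter_upwards [self_mem_nhdsWithin] with t (ht : t < 1)
    exact (if_pos ht).symm
  -- limit at 0⁺
  have ha : Tendsto F (nhdsWithin 0 (Ioi 0)) (nhds 0) := by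
    have h1 : Tendsto (fun t : ℝ =>
        c * Real.arctan (Real.sqrt l * Real.sqrt t / Real.sqrt (1 - t)))
        (nhdsWithin 0 (Ioi 0)) (nhds (c * Real.arctan (Real.sqrt l * Real.sqrt 0 / Real.sqrt (1 - 0)))) := by
      have hin : ContinuousAt (fun t : ℝ =>
          Real.sqrt l * Real.sqrt t / Real.sqrt (1 - t)) 0 := by
        apply ContinuousAt.div
        · fun_prop
        · fun_prop
        · norm_num
      have h2 : ContinuousAt (fun t : ℝ =>
          c * Real.arctan (Real.sqrt l * Real.sqrt t / Real.sqrt (1 - t))) 0 :=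
        (Real.continuous_arctan.continuousAt.comp hin).const_mul c
      exact h2.continuousWithinAt
    simp only [Real.sqrt_zero, mul_zero, zero_div, Real.arctan_zero, mul_zero] at h1
    refine h1.congr' ?_
    filter_upwards [Ioo_mem_nhdsGT_of_mem (by norm_num : (0:ℝ) ∈ Ico 0 1)] with t ht
    exact (if_pos ht.2).symm
  -- continuity on [0,1]
  have hcontF : ContinuousOn F (Icc (0:ℝ) 1) := by
    intro x hx
    rcases lt_or_eq_of_le hx.2 with hx1 | hx1
    · apply ContinuousAt.continuousWithinAt
      have hin : ContinuousAt (fun t : ℝ =>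
          Real.sqrt l * Real.sqrt t / Real.sqrt (1 - t)) x := by
        apply ContinuousAt.div
        · fun_prop
        · fun_prop
        · exact (Real.sqrt_pos.2 (by linarith)).ne'
      have hcont : ContinuousAt (fun t : ℝ =>
          c * Real.arctan (Real.sqrt l * Real.sqrt t / Real.sqrt (1 - t))) x :=
        (Real.continuous_arctan.continuousAt.comp hin).const_mul c
      refine hcont.congr ?_
      filter_upwards [Iio_mem_nhds hx1] with t ht
      exact (if_pos ht).symm
    · subst hx1
      have hF1 : F 1 = 1 / Real.sqrt l := by simp [hF]
      have key : Tendsto F (nhdsWithin 1 (Iic 1)) (nhds (1 / Real.sqrt l)) := by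
        rw [← Iio_union_right, nhdsWithin_union, nhdsWithin_singleton, tendsto_sup]
        exact ⟨hb, hF1 ▸ tendsto_pure_nhds F 1⟩
      rw [ContinuousWithinAt, hF1]
      exact key.mono_left (nhdsWithin_mono _ Icc_subset_Iic_self)
  have hint : IntervalIntegrable f' volume 0 1 := by
    apply intervalIntegral.intervalIntegrable_deriv_of_nonneg
    · simpa using hcontF
    · simpa using hderiv
    · simpa using hpos
  have := intervalIntegral.integral_eq_sub_of_hasDerivAt_of_tendsto (by norm_num : (0:ℝ) < 1)
    hderiv hint ha hb
  rw [this]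
  rw [Real.rpow_neg hl.le, ← Real.sqrt_eq_rpow]
  ring
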